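/- For every m ∈ ℕ and every real p ∈ [0,1]: B(m+1; 2m+3, p) − B(m; 2m+1, p) = p·(1 − 2p) · (2m+1 choose m) · p^m (1−p)^{m+1}. In particular, this difference is nonpositive whenever p ≥ 1/2. -/
import Mathlib


/-- Binomial cumulative distribution function:
`B(k; N, p) = ∑_{i=0}^{k} (N choose i) p^i (1-p)^(N-i)`. -/
noncomputable def binCdf (k N : ℕ) (p : ℝ) : ℝ :=
  ∑ i ∈ Finset.range (k + 1), (N.choose i : ℝ) * p ^ i * (1 - p) ^ (N - i)

/-- `g_N(p) = B(⌊N/2⌋; N, p)`. -/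
noncomputable def gN (N : ℕ) (p : ℝ) : ℝ := binCdf (N / 2) N p

lemma binCdf_succ_k (k N : ℕ) (p : ℝ) :
    binCdf (k + 1) N p = binCdf k N p + (N.choose (k+1) : ℝ) * p ^ (k+1) * (1 - p) ^ (N - (k+1)) := by
  simp [binCdf, Finset.sum_range_succ]

lemma binCdf_succ_N (n k : ℕ) (hk : k ≤ n) (p : ℝ) :
    binCdf k (n + 1) p = binCdf k n p - (n.choose k : ℝ) * p ^ (k + 1) * (1 - p) ^ (n - k) := by
  induction k with
  | zero =>
    show (∑ i ∈ Finset.range 1, ((n+1).choose i : ℝ) * p ^ i * (1 - p) ^ (n + 1 - i)) = _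
    rw [Finset.sum_range_one]
    show _ = (∑ i ∈ Finset.range 1, (n.choose i : ℝ) * p ^ i * (1 - p) ^ (n - i)) - _
    rw [Finset.sum_range_one]
    simp [pow_succ]
    ring
  | succ k ih =>
    have hk' : k ≤ n := Nat.le_of_succ_le hk
    have hq : (1 - p) ^ (n - k) = (1 - p) ^ (n - (k+1)) * (1 - p) := by
      rw [← pow_succ]
      congr 1
      omega
    rw [binCdf_succ_k, binCdf_succ_k, ih hk', Nat.choose_succ_succ,
      show n + 1 - (k + 1) = n - k from by omega]
    push_cast
    rw [hq]
    ring

theorem binCdf_odd_diff (m : ℕ) (p : ℝ) (hp0 : 0 ≤ p) (hp1 : p ≤ 1) :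
    binCdf (m + 1) (2 * m + 3) p - binCdf m (2 * m + 1) p =
        p * (1 - 2 * p) * ((2 * m + 1).choose m : ℝ) * p ^ m * (1 - p) ^ (m + 1) ∧
      (1 / 2 ≤ p →
        binCdf (m + 1) (2 * m + 3) p - binCdf m (2 * m + 1) p ≤ 0) := by
  have hsymm : (2 * m + 1).choose (m + 1) = (2 * m + 1).choose m := by
    rw [← Nat.choose_symm (by omega : m + 1 ≤ 2 * m + 1)]
    congr 1
    omega
  have h2 : (2 * m + 2).choose (m + 1) = 2 * (2 * m + 1).choose m := by
    rw [Nat.choose_succ_succ, hsymm]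
    omega
  have e1 : binCdf (m + 1) (2 * m + 3) p
      = binCdf (m + 1) (2 * m + 2) p
        - ((2 * m + 2).choose (m + 1) : ℝ) * p ^ (m + 2) * (1 - p) ^ (m + 1) := by
    have := binCdf_succ_N (2 * m + 2) (m + 1) (by omega) p
    have harith : 2 * m + 2 + 1 = 2 * m + 3 := by omega
    have harith2 : 2 * m + 2 - (m + 1) = m + 1 := by omega
    rw [harith, harith2] at this
    exact this
  have e2 : binCdf (m + 1) (2 * m + 2) p
      = binCdf (m + 1) (2 * m + 1) p
        - ((2 * m + 1).choose (m + 1) : ℝ) * p ^ (m + 2) * (1 - p) ^ m := by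
    have := binCdf_succ_N (2 * m + 1) (m + 1) (by omega) p
    have harith : 2 * m + 1 + 1 = 2 * m + 2 := by omega
    have harith2 : 2 * m + 1 - (m + 1) = m := by omega
    rw [harith, harith2] at this
    exact this
  have e3 : binCdf (m + 1) (2 * m + 1) p
      = binCdf m (2 * m + 1) p
        + ((2 * m + 1).choose (m + 1) : ℝ) * p ^ (m + 1) * (1 - p) ^ m := by
    have := binCdf_succ_k m (2 * m + 1) p
    have harith2 : 2 * m + 1 - (m + 1) = m := by omega
    rw [harith2] at this
    exact this
  have key : binCdf (m + 1) (2 * m + 3) p - binCdf m (2 * m + 1) p =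
      p * (1 - 2 * p) * ((2 * m + 1).choose m : ℝ) * p ^ m * (1 - p) ^ (m + 1) := by
    rw [e1, e2, e3, h2, hsymm]
    push_cast
    ring
  refine ⟨key, fun hp => ?_⟩
  rw [key]
  have h1 : 1 - 2 * p ≤ 0 := by linarith
  have hc : (0:ℝ) ≤ ((2 * m + 1).choose m : ℝ) := Nat.cast_nonneg _
  have hpm : (0:ℝ) ≤ p ^ m := pow_nonneg hp0 m
  have hqm : (0:ℝ) ≤ (1 - p) ^ (m + 1) := pow_nonneg (by linarith) _
  have : p * (1 - 2 * p) ≤ 0 := mul_nonpos_of_nonneg_of_nonpos hp0 h1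
  have h4 : p * (1 - 2 * p) * ((2 * m + 1).choose m : ℝ) ≤ 0 :=
    mul_nonpos_of_nonpos_of_nonneg this hc
  have h5 : p * (1 - 2 * p) * ((2 * m + 1).choose m : ℝ) * p ^ m ≤ 0 :=
    mul_nonpos_of_nonpos_of_nonneg h4 hpm
  exact mul_nonpos_of_nonpos_of_nonneg h5 hqm
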